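/- For all real numbers k > 1 and a ≥ 1, one has 2k(k² − 1)^{−3/2}·(√(k² − 1)/a − arctan(√(k² − 1)/a)) ≤ 2. -/

import Mathlib

lemma arctan_lb (x : ℝ) (hx : 0 ≤ x) : x / (1 + x ^ 2) ≤ Real.arctan x := by
  have hat : 0 ≤ Real.arctan x := by simpa using Real.arctan_strictMono.monotone hx
  have hsin : Real.sin (Real.arctan x) ≤ Real.arctan x := Real.sin_le hat
  have hsinpos : 0 ≤ Real.sin (Real.arctan x) := by
    apply Real.sin_nonneg_of_nonneg_of_le_pi hat
    have := Real.arctan_lt_pi_div_two x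
    nlinarith [Real.pi_pos]
  have hcos1 : Real.cos (Real.arctan x) ≤ 1 := Real.cos_le_one _
  have hprod : Real.sin (Real.arctan x) * Real.cos (Real.arctan x) = x / (1 + x ^ 2) := by
    rw [Real.sin_arctan, Real.cos_arctan]
    have h1 : (0:ℝ) < 1 + x ^ 2 := by positivity
    have h2 : Real.sqrt (1 + x ^ 2) * Real.sqrt (1 + x ^ 2) = 1 + x ^ 2 :=
      Real.mul_self_sqrt h1.le
    have h3 : Real.sqrt (1 + x ^ 2) ≠ 0 := by positivity
    field_simp
    rw [Real.sq_sqrt h1.le]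
  calc x / (1 + x ^ 2) = Real.sin (Real.arctan x) * Real.cos (Real.arctan x) := hprod.symm
    _ ≤ Real.sin (Real.arctan x) * 1 := by nlinarith
    _ ≤ Real.arctan x := by linarith

lemma sub_arctan_le (x : ℝ) (hx : 0 ≤ x) :
    x - Real.arctan x ≤ x ^ 3 / (1 + x ^ 2) := by
  have h := arctan_lb x hx
  have h1 : (0:ℝ) < 1 + x ^ 2 := by positivity
  have : x - x / (1 + x ^ 2) = x ^ 3 / (1 + x ^ 2) := by field_simp; ring
  linarith [this]

/-- For all real `k > 1` and `a ≥ 1`,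
`2k(k² − 1)^(−3/2) · (√(k² − 1)/a − arctan(√(k² − 1)/a)) ≤ 2`. -/
theorem stmt_15 (k a : ℝ) (hk : 1 < k) (ha : 1 ≤ a) :
    2 * k * (k ^ 2 - 1) ^ (-(3 : ℝ) / 2) *
      (Real.sqrt (k ^ 2 - 1) / a - Real.arctan (Real.sqrt (k ^ 2 - 1) / a)) ≤ 2 := by
  set s := Real.sqrt (k ^ 2 - 1) with hs
  have hk2 : (0:ℝ) < k ^ 2 - 1 := by nlinarith
  have hspos : 0 < s := Real.sqrt_pos.mpr hk2
  have hs2 : s ^ 2 = k ^ 2 - 1 := Real.sq_sqrt hk2.le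
  have ha0 : 0 < a := lt_of_lt_of_le one_pos ha
  set x := s / a with hx
  have hx0 : 0 ≤ x := by positivity
  have hxs : x ≤ s := by
    rw [hx, div_le_iff₀ ha0]; nlinarith
  -- rpow rewriting: (k²-1)^(-3/2) = 1 / s^3
  have h1 : s ^ 3 = (k ^ 2 - 1) ^ ((3:ℝ) * 2⁻¹) := by
    rw [hs, Real.sqrt_eq_rpow, ← Real.rpow_natCast (_ ^ ((1:ℝ)/2)) 3,
      ← Real.rpow_mul hk2.le]
    norm_num [mul_comm]
  have hr : (k ^ 2 - 1) ^ (-(3 : ℝ) / 2) = 1 / s ^ 3 := by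
    rw [show (-(3:ℝ)/2) = -((3:ℝ) * 2⁻¹) by ring, Real.rpow_neg hk2.le, ← h1,
      inv_eq_one_div]
  rw [hr]
  have key : x - Real.arctan x ≤ s ^ 3 / (1 + s ^ 2) := by
    have h2 := sub_arctan_le x hx0
    have h3 : x ^ 3 / (1 + x ^ 2) ≤ s ^ 3 / (1 + s ^ 2) := by
      rw [div_le_div_iff₀ (by positivity) (by positivity)]
      have h5 : x ^ 3 ≤ s ^ 3 := pow_le_pow_left₀ hx0 hxs 3
      have h6 : x * (x ^ 2 * s ^ 2) ≤ s * (x ^ 2 * s ^ 2) :=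
        mul_le_mul_of_nonneg_right hxs (by positivity)
      nlinarith [h5, h6]
    linarith
  have hmul : 2 * k * (1 / s ^ 3) * (x - Real.arctan x) ≤
      2 * k * (1 / s ^ 3) * (s ^ 3 / (1 + s ^ 2)) := by
    apply mul_le_mul_of_nonneg_left key
    positivity
  have heq : 2 * k * (1 / s ^ 3) * (s ^ 3 / (1 + s ^ 2)) = 2 / k := by
    have h4 : 1 + s ^ 2 = k ^ 2 := by linarith
    rw [h4]
    field_simp
  have hle : 2 / k ≤ 2 := by
    rw [div_le_iff₀ (by linarith : (0:ℝ) < k)]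
    nlinarith
  calc 2 * k * (1 / s ^ 3) * (x - Real.arctan x)
      ≤ 2 * k * (1 / s ^ 3) * (s ^ 3 / (1 + s ^ 2)) := hmul
    _ = 2 / k := heq
    _ ≤ 2 := hle
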